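/- Let δ ∈ [1/2, 1) and c_δ(x) = (x²/(1+x²))^δ. For integers n ≥ 2 define ξ_n : ℝ → [0,1] by ξ_n(x) = 1 for |x| ≤ 1/n, ξ_n(x) = (−log|x|)/log n for 1/n ≤ |x| ≤ 1, and ξ_n(x) = 0 for |x| ≥ 1. Then for every Lipschitz function φ : ℝ → ℝ with compact support, lim_{n→∞} [ ∫_ℝ c_δ(x) ((ξ_n φ)'(x))² dx + ∫_ℝ (ξ_n(x) φ(x))² dx ] = 0, where (ξ_n φ)' denotes the almost-everywhere derivative of the Lipschitz function ξ_n φ. -/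

import Mathlib

open MeasureTheory Real Filter Set Topology


noncomputable def cOne (δ x : ℝ) : ℝ := (x ^ 2 / (1 + x ^ 2)) ^ δ

lemma cOne_nonneg (δ x : ℝ) : 0 ≤ cOne δ x := Real.rpow_nonneg (by positivity) δ

lemma cOne_le_one (δ x : ℝ) (hδ : 0 ≤ δ) : cOne δ x ≤ 1 := by
  unfold cOne
  refine Real.rpow_le_one (by positivity) ?_ hδ
  rw [div_le_one (by positivity)]
  nlinarith

lemma cOne_mul_inv_sq (δ x : ℝ) (hδ : 1/2 ≤ δ) (hx0 : x ≠ 0) (hx1 : |x| ≤ 1) :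
    cOne δ x * (x⁻¹)^2 ≤ |x|⁻¹ := by
  have hδ0 : (0:ℝ) ≤ δ := le_trans (by norm_num) hδ
  have habs : 0 < |x| := abs_pos.mpr hx0
  have h1 : cOne δ x ≤ |x| ^ (2*δ) := by
    unfold cOne
    calc (x^2/(1+x^2))^δ ≤ (x^2)^δ :=
          Real.rpow_le_rpow (by positivity) (div_le_self (by positivity) (by nlinarith)) hδ0
      _ = |x| ^ (2*δ) := by
          rw [← sq_abs x, ← Real.rpow_natCast |x| 2, ← Real.rpow_mul (abs_nonneg x)]
          norm_num
  have h2 : (x⁻¹)^2 = |x| ^ (-2 : ℝ) := by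
    rw [show (-2:ℝ) = ((-2:ℤ):ℝ) by norm_num, Real.rpow_intCast, zpow_neg,
      zpow_two, abs_mul_abs_self, sq, mul_inv]
  calc cOne δ x * (x⁻¹)^2 ≤ |x| ^ (2*δ) * |x| ^ (-2:ℝ) := by
        rw [h2]
        exact mul_le_mul_of_nonneg_right h1 (Real.rpow_nonneg (abs_nonneg x) _)
    _ = |x| ^ (2*δ - 2) := by rw [← Real.rpow_add habs]; ring_nf
    _ ≤ |x| ^ (-1 : ℝ) := Real.rpow_le_rpow_of_exponent_ge habs hx1 (by linarith)
    _ = |x|⁻¹ := Real.rpow_neg_one |x|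

lemma abs_deriv_le_of_lip {K : NNReal} {φ : ℝ → ℝ} (hK : LipschitzWith K φ) (x : ℝ) :
    |deriv φ x| ≤ K := by
  have h := norm_fderiv_le_of_lipschitz ℝ hK (x₀ := x)
  calc |deriv φ x| = ‖(fderiv ℝ φ x) 1‖ := by rw [fderiv_apply_one_eq_deriv]; rfl
    _ ≤ ‖fderiv ℝ φ x‖ * ‖(1:ℝ)‖ := ContinuousLinearMap.le_opNorm _ _
    _ ≤ K := by rw [norm_one, mul_one]; exact h


noncomputable def bnd (n : ℕ) (a b c t : ℝ) : ℝ :=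
  if t ≤ 1/n then a else if t ≤ 1 then b * t⁻¹ + c * (-Real.log t) else 0

lemma bnd_meas (n : ℕ) (a b c : ℝ) : Measurable (fun x : ℝ => bnd n a b c |x|) := by
  unfold bnd
  have habs : Measurable (fun x : ℝ => |x|) := continuous_abs.measurable
  refine Measurable.ite (habs measurableSet_Iic) measurable_const ?_
  refine Measurable.ite (habs measurableSet_Iic) ?_ measurable_const
  exact ((habs.inv.const_mul b).add (((Real.measurable_log.comp habs).neg).const_mul c))

lemma bnd_nonneg (n : ℕ) (hn : 2 ≤ n) (a b c : ℝ) (ha : 0 ≤ a) (hb : 0 ≤ b) (hc : 0 ≤ c)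
    (t : ℝ) (ht : 0 ≤ t) : 0 ≤ bnd n a b c t := by
  unfold bnd
  split_ifs with h1 h2
  · exact ha
  · have htpos : 0 < t := lt_of_lt_of_le (by positivity) (le_of_not_ge h1)
    have : Real.log t ≤ 0 := Real.log_nonpos ht h2
    have : 0 ≤ -Real.log t := by linarith
    positivity
  · exact le_refl 0

lemma bnd_le_bound (n : ℕ) (hn : 2 ≤ n) (a b c : ℝ) (x : ℝ) :
    ‖bnd n a b c |x|‖ ≤ Set.indicator (Icc (-1:ℝ) 1) (fun _ => |a| + |b| * n + |c| * Real.log n) x := by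
  have hnpos : (0:ℝ) < n := by positivity
  have hinv : (0:ℝ) < 1/n := by positivity
  have hn1 : (1:ℝ)/n ≤ 1 := by
    rw [div_le_one hnpos]; exact one_le_two.trans (by exact_mod_cast hn)
  have hlogn : 0 ≤ Real.log n := Real.log_nonneg (one_le_two.trans (by exact_mod_cast hn))
  by_cases hx1 : |x| ≤ 1
  · rw [Set.indicator_of_mem (Set.mem_Icc.mpr (abs_le.mp hx1))]
    unfold bnd
    by_cases h1 : |x| ≤ 1/n
    · rw [if_pos h1]
      rw [Real.norm_eq_abs]
      nlinarith [mul_nonneg (abs_nonneg b) hnpos.le, mul_nonneg (abs_nonneg c) hlogn]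
    · rw [if_neg h1, if_pos hx1]
      have hxpos : 0 < |x| := lt_trans hinv (lt_of_not_ge h1)
      have h1n : 1/(n:ℝ) < |x| := lt_of_not_ge h1
      have hinvle : |x|⁻¹ ≤ n := by
        rw [inv_le_comm₀ hxpos hnpos, ← one_div]
        exact h1n.le
      have hlog1 : Real.log |x| ≤ 0 := Real.log_nonpos hxpos.le hx1
      have hlog2 : -Real.log |x| ≤ Real.log n := by
        have h := Real.log_le_log hinv h1n.le
        rw [Real.log_div one_ne_zero (ne_of_gt hnpos), Real.log_one] at h
        linarith
      have hb1 : ‖b * |x|⁻¹‖ ≤ |b| * n := by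
        rw [norm_mul, Real.norm_eq_abs, Real.norm_eq_abs, abs_of_nonneg (by positivity : (0:ℝ) ≤ |x|⁻¹)]
        exact mul_le_mul_of_nonneg_left hinvle (abs_nonneg b)
      have hc1 : ‖c * (-Real.log |x|)‖ ≤ |c| * Real.log n := by
        rw [norm_mul, Real.norm_eq_abs, Real.norm_eq_abs, abs_of_nonneg (by linarith : (0:ℝ) ≤ -Real.log |x|)]
        exact mul_le_mul_of_nonneg_left hlog2 (abs_nonneg c)
      calc ‖b * |x|⁻¹ + c * (-Real.log |x|)‖
          ≤ ‖b * |x|⁻¹‖ + ‖c * (-Real.log |x|)‖ := norm_add_le _ _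
        _ ≤ |b| * n + |c| * Real.log n := add_le_add hb1 hc1
        _ ≤ |a| + |b| * n + |c| * Real.log n := by linarith [abs_nonneg a]
  · have : bnd n a b c |x| = 0 := by
      unfold bnd
      rw [if_neg (by push_neg at hx1 ⊢; linarith), if_neg hx1]
    rw [this, norm_zero]
    exact Set.indicator_nonneg (fun y _ => by positivity) x

lemma bnd_integrable (n : ℕ) (hn : 2 ≤ n) (a b c : ℝ) :
    Integrable (fun x : ℝ => bnd n a b c |x|) := by
  refine Integrable.mono' ?_ (bnd_meas n a b c).aestronglyMeasurable
    (Filter.Eventually.of_forall (bnd_le_bound n hn a b c))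
  refine (integrable_indicator_iff measurableSet_Icc).mpr ?_
  exact integrableOn_const measure_Icc_lt_top.ne

lemma bnd_integral_le (n : ℕ) (hn : 2 ≤ n) (a b c : ℝ)
    (ha : 0 ≤ a) (hb : 0 ≤ b) (hc : 0 ≤ c) :
    ∫ x : ℝ, bnd n a b c |x| ≤ 2 * (a/n + b * Real.log n + c) := by
  have hnpos : (0:ℝ) < n := by positivity
  have hinv : (0:ℝ) < 1/n := by positivity
  have hn1 : (1:ℝ)/n ≤ 1 := by
    rw [div_le_one hnpos]; exact one_le_two.trans (by exact_mod_cast hn)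
  have hlogn : 0 ≤ Real.log n := Real.log_nonneg (one_le_two.trans (by exact_mod_cast hn))
  rw [integral_comp_abs (f := fun t => bnd n a b c t)]
  have key : ∫ t in Ioi (0:ℝ), bnd n a b c t ≤ a/n + b * Real.log n + c := by
    -- zero on Ioi 1
    have hzero : ∀ t ∈ Ioi (1:ℝ), bnd n a b c t = 0 := by
      intro t ht
      simp only [mem_Ioi] at ht
      unfold bnd
      rw [if_neg (by linarith), if_neg (by linarith)]
    -- const on Ioc 0 (1/n)
    have hconst : ∀ t ∈ Ioc (0:ℝ) (1/n), bnd n a b c t = a := by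
      intro t ht
      unfold bnd
      rw [if_pos ht.2]
    -- middle
    have hmid : ∀ t ∈ Ioc ((1:ℝ)/n) 1, bnd n a b c t = b * t⁻¹ + c * (-Real.log t) := by
      intro t ht
      unfold bnd
      rw [if_neg (not_le.mpr ht.1), if_pos ht.2]
    have hsplit1 : Ioi (0:ℝ) = Ioc 0 1 ∪ Ioi 1 := (Ioc_union_Ioi_eq_Ioi zero_le_one).symm
    have hsplit2 : Ioc (0:ℝ) 1 = Ioc (0:ℝ) (1/(n:ℝ)) ∪ Ioc (1/(n:ℝ)) (1:ℝ) := (Ioc_union_Ioc_eq_Ioc (a:=(0:ℝ)) hinv.le hn1).symm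
    have int1 : IntegrableOn (bnd n a b c) (Ioc (0:ℝ) (1/n)) := by
      refine (integrableOn_congr_fun hconst measurableSet_Ioc).mpr ?_
      exact integrableOn_const measure_Ioc_lt_top.ne
    have hcm : ContinuousOn (fun t : ℝ => b * t⁻¹ + c * (-Real.log t)) (Set.uIcc ((1:ℝ)/n) 1) := by
      have hne : ∀ t ∈ Set.uIcc ((1:ℝ)/n) 1, t ≠ 0 := by
        intro t ht
        rw [Set.uIcc_of_le hn1] at ht
        exact ne_of_gt (lt_of_lt_of_le hinv ht.1)
      exact ((continuousOn_const.mul (continuousOn_id.inv₀ hne)).add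
        (continuousOn_const.mul ((continuousOn_id.log hne).neg)))
    have int2 : IntegrableOn (bnd n a b c) (Ioc ((1:ℝ)/n) 1) := by
      refine (integrableOn_congr_fun hmid measurableSet_Ioc).mpr ?_
      exact (intervalIntegrable_iff_integrableOn_Ioc_of_le hn1).mp
        (hcm.intervalIntegrable)
    have int3 : IntegrableOn (bnd n a b c) (Ioi (1:ℝ)) := by
      refine (integrableOn_congr_fun hzero measurableSet_Ioi).mpr integrableOn_zero
    rw [hsplit1, setIntegral_union (Ioc_disjoint_Ioi le_rfl) measurableSet_Ioi
      (by rw [hsplit2]; exact int1.union int2) int3]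
    rw [setIntegral_congr_fun measurableSet_Ioi hzero, integral_zero, add_zero]
    rw [hsplit2, setIntegral_union (Set.Ioc_disjoint_Ioc_of_le le_rfl) measurableSet_Ioc int1 int2]
    have e1 : ∫ t in Ioc (0:ℝ) (1/n), bnd n a b c t = a / n := by
      rw [setIntegral_congr_fun measurableSet_Ioc hconst, setIntegral_const,
        measureReal_def, Real.volume_Ioc, smul_eq_mul, sub_zero, ENNReal.toReal_ofReal hinv.le]
      ring
    have e2 : ∫ t in Ioc ((1:ℝ)/n) 1, bnd n a b c t ≤ b * Real.log n + c := by
      rw [setIntegral_congr_fun measurableSet_Ioc hmid,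
        ← intervalIntegral.integral_of_le hn1]
      have hnot : (0:ℝ) ∉ Set.uIcc ((1:ℝ)/n) 1 := by
        rw [Set.uIcc_of_le hn1]
        intro h
        exact absurd h.1 (not_le.mpr hinv)
      have hne : ∀ t ∈ Set.uIcc ((1:ℝ)/n) 1, t ≠ 0 := by
        intro t ht
        rw [Set.uIcc_of_le hn1] at ht
        exact ne_of_gt (lt_of_lt_of_le hinv ht.1)
      have ii1 : IntervalIntegrable (fun t : ℝ => b * t⁻¹) volume (1/n) 1 :=
        (continuousOn_const.mul (continuousOn_id.inv₀ hne)).intervalIntegrable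
      have ii2 : IntervalIntegrable (fun t : ℝ => c * (-Real.log t)) volume (1/n) 1 :=
        (continuousOn_const.mul ((continuousOn_id.log hne).neg)).intervalIntegrable
      rw [intervalIntegral.integral_add ii1 ii2, intervalIntegral.integral_const_mul,
        intervalIntegral.integral_const_mul]
      have hinvint : (∫ t in (1/(n:ℝ))..1, t⁻¹) = Real.log n := by
        rw [integral_inv hnot, one_div_one_div]
      have hlogint : (∫ t in (1/(n:ℝ))..1, -Real.log t) = 1 - 1/n - Real.log n / n := by
        rw [intervalIntegral.integral_neg, integral_log]
        rw [one_div, Real.log_inv, Real.log_one]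
        ring
      rw [hinvint, hlogint]
      have : c * (1 - 1/n - Real.log n / n) ≤ c := by
        have h1 : Real.log n / n ≥ 0 := by positivity
        nlinarith
      linarith
    linarith [e1, e2]
  linarith [key]

noncomputable def xiCut (n : ℕ) (x : ℝ) : ℝ :=
  if |x| ≤ 1 / n then 1 else if |x| ≤ 1 then (-Real.log |x|) / Real.log n else 0

lemma xiCut_meas (n : ℕ) : Measurable (xiCut n) := by
  unfold xiCut
  have habs : Measurable (fun x : ℝ => |x|) := continuous_abs.measurable
  refine Measurable.ite (habs measurableSet_Iic) measurable_const ?_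
  refine Measurable.ite (habs measurableSet_Iic) ?_ measurable_const
  exact ((Real.measurable_log.comp habs).neg).div_const _

lemma sq_xiCut_le (n : ℕ) (hn : 2 ≤ n) (φ : ℝ → ℝ) (M : ℝ) (hM : ∀ x, |φ x| ≤ M) (x : ℝ) :
    (xiCut n x * φ x)^2 ≤ bnd n (M^2) 0 (M^2 / Real.log n) |x| := by
  have hM0 : 0 ≤ M := le_trans (abs_nonneg _) (hM x)
  have hn1 : (1:ℝ) < n := by exact_mod_cast Nat.lt_of_lt_of_le one_lt_two hn
  have hL : 0 < Real.log n := Real.log_pos hn1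
  have hsq : (φ x)^2 ≤ M^2 := by nlinarith [hM x, abs_nonneg (φ x), sq_abs (φ x)]
  unfold xiCut bnd
  split_ifs with h1 h2
  · rw [one_mul]; exact hsq
  · have hxpos : 0 < |x| := lt_trans (by positivity) (lt_of_not_ge h1)
    set l := -Real.log |x| with hl
    have hl0 : 0 ≤ l := by
      have := Real.log_nonpos (abs_nonneg x) h2
      simp only [hl]; linarith
    have hlL : l ≤ Real.log n := by
      have h := Real.log_le_log (by positivity : (0:ℝ) < 1/n) (lt_of_not_ge h1).le
      rw [Real.log_div one_ne_zero (by positivity), Real.log_one] at h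
      simp only [hl]; linarith
    have hξ1 : l / Real.log n ≤ 1 := (div_le_one hL).mpr hlL
    have hξ0 : 0 ≤ l / Real.log n := by positivity
    calc (l / Real.log n * φ x)^2 = (l / Real.log n)^2 * (φ x)^2 := by ring
      _ ≤ (l / Real.log n)^2 * M^2 := mul_le_mul_of_nonneg_left hsq (by positivity)
      _ ≤ (l / Real.log n) * M^2 := by nlinarith [sq_nonneg M, mul_nonneg hξ0 (sq_nonneg M)]
      _ = 0 * |x|⁻¹ + M^2 / Real.log n * l := by field_simp; ring
  · simp

set_option maxHeartbeats 1000000 in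
lemma deriv_bound_ae (n : ℕ) (hn : 2 ≤ n) (δ : ℝ) (hδ : 1/2 ≤ δ) {K : NNReal} {φ : ℝ → ℝ}
    (hK : LipschitzWith K φ) (M : ℝ) (hM : ∀ x, |φ x| ≤ M) :
    ∀ᵐ x : ℝ, cOne δ x * (deriv (fun y => xiCut n y * φ y) x)^2 ≤
      bnd n ((K:ℝ)^2) (2*M^2/(Real.log n)^2) (2*(K:ℝ)^2/Real.log n) |x| := by
  have hn1 : (1:ℝ) < n := by exact_mod_cast Nat.lt_of_lt_of_le one_lt_two hn
  have hL : 0 < Real.log n := Real.log_pos hn1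
  have hinv : (0:ℝ) < 1/n := by positivity
  have hinvle1 : (1:ℝ)/n ≤ 1 := by rw [div_le_one (by positivity)]; linarith
  have hδ0 : (0:ℝ) ≤ δ := le_trans (by norm_num) hδ
  have hdiff : ∀ᵐ x : ℝ, DifferentiableAt ℝ φ x := hK.ae_differentiableAt
  have hS : ∀ᵐ x : ℝ, x ∉ ({1/(n:ℝ), -(1/(n:ℝ)), 1, -1} : Set ℝ) := by
    rw [← measure_eq_zero_iff_ae_notMem]
    exact (Set.toFinite _).measure_zero _
  filter_upwards [hdiff, hS] with x hdx hxS
  simp only [Set.mem_insert_iff, Set.mem_singleton_iff, not_or] at hxS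
  obtain ⟨hs1, hs2, hs3, hs4⟩ := hxS
  have habs1 : |x| ≠ 1/n := by
    intro h; rcases (abs_eq hinv.le).mp h with h | h
    exacts [hs1 h, hs2 h]
  have habs2 : |x| ≠ 1 := by
    intro h; rcases (abs_eq zero_le_one).mp h with h | h
    exacts [hs3 h, hs4 h]
  rcases lt_trichotomy |x| (1/n) with hx | hx | hx
  · -- inner region
    have hev : (fun y => xiCut n y * φ y) =ᶠ[𝓝 x] φ := by
      have ho : IsOpen {y : ℝ | |y| < 1/(n:ℝ)} := isOpen_lt continuous_abs continuous_const
      filter_upwards [ho.mem_nhds hx] with y hy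
      rw [show xiCut n y = 1 from if_pos (le_of_lt hy), one_mul]
    rw [hev.deriv_eq]
    unfold bnd; rw [if_pos hx.le]
    have h1 := abs_deriv_le_of_lip hK x
    have h2 : (deriv φ x)^2 ≤ (K:ℝ)^2 := by
      nlinarith [abs_nonneg (deriv φ x), sq_abs (deriv φ x)]
    nlinarith [cOne_nonneg δ x, cOne_le_one δ x hδ0, sq_nonneg (deriv φ x)]
  · exact absurd hx habs1
  rcases lt_trichotomy |x| 1 with hx1 | hx1 | hx1
  · -- middle region
    have hx0 : x ≠ 0 := by
      intro h; rw [h, abs_zero] at hx; exact absurd hx (not_lt.mpr hinv.le)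
    have hxpos : 0 < |x| := abs_pos.mpr hx0
    set L := Real.log n with hLdef
    have hev : (fun y => xiCut n y * φ y) =ᶠ[𝓝 x] (fun y => -Real.log y / L * φ y) := by
      have ho : IsOpen ({y : ℝ | 1/(n:ℝ) < |y|} ∩ {y : ℝ | |y| < 1}) :=
        (isOpen_lt continuous_const continuous_abs).inter
          (isOpen_lt continuous_abs continuous_const)
      filter_upwards [ho.mem_nhds ⟨hx, hx1⟩] with y hy
      have : xiCut n y = -Real.log y / L := by
        unfold xiCut; rw [if_neg (not_le.mpr hy.1), if_pos hy.2.le, Real.log_abs]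
      rw [this]
    have hder : HasDerivAt (fun y => -Real.log y / L * φ y)
        ((-x⁻¹ / L) * φ x + (-Real.log x / L) * deriv φ x) x :=
      (((Real.hasDerivAt_log hx0).neg).div_const L).mul hdx.hasDerivAt
    rw [hev.deriv_eq, hder.deriv]
    unfold bnd; rw [if_neg (not_le.mpr hx), if_pos hx1.le]
    set A := -x⁻¹ / L * φ x with hA
    set B := -Real.log x / L * deriv φ x with hB
    set c := cOne δ x with hc
    have hc0 : 0 ≤ c := cOne_nonneg δ x
    have hc1 : c ≤ 1 := cOne_le_one δ x hδ0
    have hsq : (φ x)^2 ≤ M^2 := by nlinarith [hM x, abs_nonneg (φ x), sq_abs (φ x)]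
    set l := -Real.log |x| with hl
    have hl0 : 0 ≤ l := by
      have := Real.log_nonpos (abs_nonneg x) hx1.le
      simp only [hl]; linarith
    have hlL : l ≤ L := by
      have h := Real.log_le_log hinv hx.le
      rw [Real.log_div one_ne_zero (by positivity), Real.log_one] at h
      simp only [hl, hLdef]; linarith
    have hlx : -Real.log x = l := by rw [hl, Real.log_abs]
    have key1 : c * A^2 ≤ M^2 / L^2 * |x|⁻¹ := by
      have e1 : A^2 = (x⁻¹)^2 * ((φ x)^2 / L^2) := by rw [hA]; ring
      have e2 : c * (x⁻¹)^2 ≤ |x|⁻¹ := cOne_mul_inv_sq δ x hδ hx0 hx1.le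
      have e3 : (φ x)^2 / L^2 ≤ M^2 / L^2 := by gcongr
      calc c * A^2 = (c * (x⁻¹)^2) * ((φ x)^2 / L^2) := by rw [e1]; ring
        _ ≤ |x|⁻¹ * (M^2 / L^2) :=
            mul_le_mul e2 e3 (by positivity) (by positivity)
        _ = M^2 / L^2 * |x|⁻¹ := by ring
    have key2 : c * B^2 ≤ (K:ℝ)^2 / L * l := by
      have hd2 : (deriv φ x)^2 ≤ (K:ℝ)^2 := by
        nlinarith [abs_deriv_le_of_lip hK x, abs_nonneg (deriv φ x), sq_abs (deriv φ x)]
      have hB2 : B^2 = (l/L)^2 * (deriv φ x)^2 := by rw [hB, ← hlx]; ring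
      have hξ1 : l / L ≤ 1 := (div_le_one hL).mpr hlL
      have hξ0 : 0 ≤ l / L := by positivity
      calc c * B^2 ≤ B^2 := by nlinarith [sq_nonneg B]
        _ = (l/L)^2 * (deriv φ x)^2 := hB2
        _ ≤ (l/L)^2 * (K:ℝ)^2 := mul_le_mul_of_nonneg_left hd2 (by positivity)
        _ ≤ (l/L) * (K:ℝ)^2 := by nlinarith [sq_nonneg (K:ℝ), mul_nonneg hξ0 (sq_nonneg (K:ℝ))]
        _ = (K:ℝ)^2 / L * l := by ring
    calc c * (A + B)^2 ≤ c * (2*A^2 + 2*B^2) :=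
          mul_le_mul_of_nonneg_left (by nlinarith [sq_nonneg (A - B)]) hc0
      _ = 2*(c*A^2) + 2*(c*B^2) := by ring
      _ ≤ 2*(M^2/L^2*|x|⁻¹) + 2*((K:ℝ)^2/L*l) := by linarith
      _ = 2*M^2/L^2 * |x|⁻¹ + 2*(K:ℝ)^2/L * l := by ring
  · exact absurd hx1 habs2
  · -- outer region
    have hev : (fun y => xiCut n y * φ y) =ᶠ[𝓝 x] (fun _ => (0:ℝ)) := by
      have ho : IsOpen {y : ℝ | 1 < |y|} := isOpen_lt continuous_const continuous_abs
      filter_upwards [ho.mem_nhds hx1] with y hy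
      have hy' : (1:ℝ) < |y| := hy
      have : xiCut n y = 0 := by
        unfold xiCut
        rw [if_neg (by push_neg; linarith), if_neg (by push_neg; exact hy')]
      rw [this, zero_mul]
    rw [hev.deriv_eq, deriv_const]
    unfold bnd
    rw [if_neg (by push_neg; linarith), if_neg (not_le.mpr hx1)]
    norm_num

theorem stmt_18 (δ : ℝ) (hδ : 1 / 2 ≤ δ) (hδ1 : δ < 1)
    (φ : ℝ → ℝ) (hlip : ∃ K, LipschitzWith K φ) (hsupp : HasCompactSupport φ) :
    Tendsto (fun n : ℕ =>
        (∫ x : ℝ, cOne δ x * (deriv (fun y => xiCut n y * φ y) x) ^ 2) +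
          ∫ x : ℝ, (xiCut n x * φ x) ^ 2)
      atTop (nhds 0) := by
  obtain ⟨K, hK⟩ := hlip
  obtain ⟨M, hM⟩ := hsupp.exists_bound_of_continuous hK.continuous
  have hM' : ∀ x, |φ x| ≤ M := fun x => by rw [← Real.norm_eq_abs]; exact hM x
  have hM0 : 0 ≤ M := le_trans (abs_nonneg _) (hM' 0)
  set H := fun n : ℕ =>
    (2*(K:ℝ)^2 + 2*M^2) * (n:ℝ)⁻¹ + (6*M^2 + 4*(K:ℝ)^2) * (Real.log n)⁻¹ with hH
  have tendstoH : Tendsto H atTop (nhds 0) := by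
    have h1 := tendsto_inv_atTop_nhds_zero_nat (𝕜 := ℝ)
    have h2 : Tendsto (fun n : ℕ => (Real.log n)⁻¹) atTop (nhds 0) :=
      (Real.tendsto_log_atTop.comp tendsto_natCast_atTop_atTop).inv_tendsto_atTop
    have := (h1.const_mul (2*(K:ℝ)^2 + 2*M^2)).add (h2.const_mul (6*M^2 + 4*(K:ℝ)^2))
    simpa using this
  refine tendsto_of_tendsto_of_tendsto_of_le_of_le' tendsto_const_nhds tendstoH
    (Eventually.of_forall fun n => ?_) ?_
  · exact add_nonneg
      (integral_nonneg fun x => mul_nonneg (cOne_nonneg δ x) (sq_nonneg _))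
      (integral_nonneg fun x => sq_nonneg _)
  · filter_upwards [eventually_ge_atTop 2] with n hn
    have hn1 : (1:ℝ) < n := by exact_mod_cast Nat.lt_of_lt_of_le one_lt_two hn
    have hnpos : (0:ℝ) < n := by linarith
    have hL : 0 < Real.log n := Real.log_pos hn1
    set L := Real.log n with hLdef
    -- second integral
    have meas2 : Measurable fun x : ℝ => (xiCut n x * φ x)^2 :=
      ((xiCut_meas n).mul hK.continuous.measurable).pow_const 2
    have hb2 : ∀ x, (xiCut n x * φ x)^2 ≤ bnd n (M^2) 0 (M^2 / L) |x| :=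
      sq_xiCut_le n hn φ M hM'
    have hbi2 := bnd_integrable n hn (M^2) 0 (M^2 / L)
    have hint2 : Integrable fun x : ℝ => (xiCut n x * φ x)^2 := by
      refine hbi2.mono' meas2.aestronglyMeasurable (Eventually.of_forall fun x => ?_)
      rw [Real.norm_eq_abs, abs_of_nonneg (sq_nonneg _)]
      exact hb2 x
    have hI2 : (∫ x : ℝ, (xiCut n x * φ x)^2) ≤ 2*(M^2/n + 0*L + M^2/L) := by
      refine le_trans (integral_mono hint2 hbi2 hb2) ?_
      exact bnd_integral_le n hn _ _ _ (by positivity) le_rfl (by positivity)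
    -- first integral
    have meas1 : Measurable fun x : ℝ =>
        cOne δ x * (deriv (fun y => xiCut n y * φ y) x)^2 := by
      have hc : Measurable (cOne δ) := by
        unfold cOne
        have hb : Continuous fun x : ℝ => x ^ 2 / (1 + x ^ 2) :=
          (continuous_pow 2).div (continuous_const.add (continuous_pow 2))
            (fun x => by positivity)
        exact (hb.rpow_const (fun x => Or.inr (le_trans (by norm_num) hδ))).measurable
      exact hc.mul ((measurable_deriv _).pow_const 2)
    have hb1 := deriv_bound_ae n hn δ hδ hK M hM'
    have hbi1 := bnd_integrable n hn ((K:ℝ)^2) (2*M^2/L^2) (2*(K:ℝ)^2/L)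
    have hint1 : Integrable fun x : ℝ =>
        cOne δ x * (deriv (fun y => xiCut n y * φ y) x)^2 := by
      refine hbi1.mono' meas1.aestronglyMeasurable ?_
      filter_upwards [hb1] with x hx
      rwa [Real.norm_eq_abs, abs_of_nonneg (mul_nonneg (cOne_nonneg δ x) (sq_nonneg _))]
    have hI1 : (∫ x : ℝ, cOne δ x * (deriv (fun y => xiCut n y * φ y) x)^2)
        ≤ 2*((K:ℝ)^2/n + (2*M^2/L^2)*L + 2*(K:ℝ)^2/L) := by
      refine le_trans (integral_mono_ae hint1 hbi1 hb1) ?_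
      exact bnd_integral_le n hn _ _ _ (by positivity) (by positivity) (by positivity)
    have hfin : 2*((K:ℝ)^2/n + (2*M^2/L^2)*L + 2*(K:ℝ)^2/L) + 2*(M^2/(n:ℝ) + 0*L + M^2/L)
        = H n := by
      rw [hH]; simp only [← hLdef]
      field_simp
      ring
    exact le_trans (add_le_add hI1 hI2) (le_of_eq hfin)
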